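/- Let D ≥ 2 and n ≥ 2, and let m be the unique natural number with D^m ≤ n < D^{m+1}. Let k = D^m − ⌈(n − D^m)/(D − 1)⌉, where the ceiling is taken over the rationals. Let P be a PMF on n symbols whose entries are sorted nonincreasingly (P i ≥ P j whenever i ≤ j), and suppose P is a point of maximum, i.e. L_D(P) = L_D(U_n). Define lengths l : Fin n → ℕ by l i = m for i < k and l i = m + 1 for i ≥ k. Then ∑ i, P i * l i = L_D(P); that is, the optimal length sequence of the uniform distribution is also an optimal length sequence for P. -/

import Mathlib

/-- `P` is a probability mass function on `n` symbols: all entries positive, summing to 1. -/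
def IsPMF {n : ℕ} (P : Fin n → ℝ) : Prop :=
  (∀ i, 0 < P i) ∧ ∑ i, P i = 1

/-- `c` is a `D`-ary prefix code on `n` symbols: injective, and no codeword is a
prefix of another. -/
def IsPrefixCode {D n : ℕ} (c : Fin n → List (Fin D)) : Prop :=
  Function.Injective c ∧ ∀ i j : Fin n, i ≠ j → ¬ (c i <+: c j)

/-- Expected length of the code `c` under the PMF `P`. -/
noncomputable def expLen {D n : ℕ} (P : Fin n → ℝ) (c : Fin n → List (Fin D)) : ℝ :=
  ∑ i, P i * ((c i).length : ℝ)

/-- Minimum expected length: infimum of expected lengths over all `D`-ary prefix codes. -/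
noncomputable def minExpLen (D : ℕ) {n : ℕ} (P : Fin n → ℝ) : ℝ :=
  sInf {x : ℝ | ∃ c : Fin n → List (Fin D), IsPrefixCode c ∧ x = expLen P c}

/-- The uniform distribution on `n` symbols. -/
noncomputable def unif (n : ℕ) : Fin n → ℝ := fun _ => 1 / n

namespace Stmt10Aux



lemma prefix_of_forall_getElem {α : Type*} {a b : List α} (h : a.length ≤ b.length)
    (hg : ∀ t (ht : t < a.length), a[t] = b[t]'(lt_of_lt_of_le ht h)) : a <+: b := by
  rw [List.prefix_iff_eq_take]
  apply List.ext_getElem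
  · simp [Nat.min_eq_left h]
  · intro t h1 h2
    rw [List.getElem_take]
    exact hg t h1

lemma dig_inj (D : ℕ) (hD : 0 < D) : ∀ (L v w : ℕ), v < D ^ L → w < D ^ L →
    (∀ t < L, v / D ^ t % D = w / D ^ t % D) → v = w := by
  intro L
  induction L with
  | zero => intro v w hv hw _; simp at hv hw; omega
  | succ L ih =>
    intro v w hv hw h
    have h0 := h 0 (Nat.succ_pos L)
    simp only [pow_zero, Nat.div_one] at h0
    have h1 : v / D = w / D := by
      apply ih
      · exact Nat.div_lt_of_lt_mul (by rwa [← pow_succ'] )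
      · exact Nat.div_lt_of_lt_mul (by rwa [← pow_succ'] )
      · intro t ht
        have h2 := h (t + 1) (by omega)
        simp only [Nat.div_div_eq_div_mul, ← pow_succ']
        exact h2
    have hv' := Nat.div_add_mod v D
    have hw' := Nat.div_add_mod w D
    rw [h1, h0] at hv'
    exact hv'.symm.trans hw'



lemma dig_mod (D m t b : ℕ) (hD : 0 < D) (ht : t < m) :
    b / D ^ t % D = b % D ^ m / D ^ t % D := by
  have hrb : b = D ^ m * (b / D ^ m) + b % D ^ m := (Nat.div_add_mod b (D ^ m)).symm
  have h1 : D ^ m = D ^ t * (D * D ^ (m - t - 1)) := by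
    rw [← pow_succ', ← pow_add]
    congr 1
    omega
  conv_lhs => rw [hrb]
  rw [h1, mul_assoc, Nat.mul_add_div (pow_pos hD t)]
  rw [mul_assoc D, Nat.mul_add_mod]

/-- Base-`D`, least-significant-digit-first word of length `L` encoding `v`. -/
def word (D : ℕ) (hD : 0 < D) (L v : ℕ) : List (Fin D) :=
  List.ofFn fun t : Fin L => ⟨v / D ^ (t : ℕ) % D, Nat.mod_lt _ hD⟩

lemma word_length (D : ℕ) (hD : 0 < D) (L v : ℕ) : (word D hD L v).length = L := by
  simp [word]

lemma word_getElem (D : ℕ) (hD : 0 < D) (L v t : ℕ) (ht : t < (word D hD L v).length) :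
    (word D hD L v)[t] = (⟨v / D ^ t % D, Nat.mod_lt _ hD⟩ : Fin D) := by
  simp [word]


lemma exists_code (D n m k : ℕ) (hD : 2 ≤ D) (hkD : k ≤ D ^ m) (hkn : k ≤ n)
    (hkraft : n - k ≤ D * (D ^ m - k)) :
    ∃ c : Fin n → List (Fin D), IsPrefixCode c ∧
      ∀ i : Fin n, (c i).length = if (i : ℕ) < k then m else m + 1 := by
  have hD0 : 0 < D := by omega
  set s : ℕ := D ^ m - k with hs
  -- the value encoded by index a
  set val : ℕ → ℕ := fun a => if a < k then a else k + (a - k) % s + D ^ m * ((a - k) / s)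
    with hval
  set len : ℕ → ℕ := fun a => if a < k then m else m + 1 with hlen
  -- facts about long values
  have hspos : ∀ a : ℕ, k ≤ a → a < n → 0 < s := by
    intro a ha han
    rcases Nat.eq_zero_or_pos s with h0 | h0
    · rw [h0, Nat.mul_zero] at hkraft; omega
    · exact h0
  have hmod : ∀ a : ℕ, k ≤ a → a < n → val a % D ^ m = k + (a - k) % s := by
    intro a ha han
    have hs0 := hspos a ha han
    have hlt : k + (a - k) % s < D ^ m := by
      have := Nat.mod_lt (a - k) hs0
      omega
    simp only [hval, if_neg (by omega : ¬ a < k)]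
    rw [Nat.add_mul_mod_self_left, Nat.mod_eq_of_lt hlt]
  have hdiv : ∀ a : ℕ, k ≤ a → a < n → val a / D ^ m = (a - k) / s := by
    intro a ha han
    have hs0 := hspos a ha han
    have hlt : k + (a - k) % s < D ^ m := by
      have := Nat.mod_lt (a - k) hs0
      omega
    simp only [hval, if_neg (by omega : ¬ a < k)]
    rw [Nat.add_mul_div_left _ _ (pow_pos hD0 m), Nat.div_eq_of_lt hlt, Nat.zero_add]
  have hvlt : ∀ a : ℕ, k ≤ a → a < n → val a < D ^ (m + 1) := by
    intro a ha han
    have hs0 := hspos a ha han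
    have hq : (a - k) / s ≤ D - 1 := by
      have : (a - k) / s < D := (Nat.div_lt_iff_lt_mul hs0).2 (by omega)
      omega
    have h2 : D ^ m * ((a - k) / s) ≤ D ^ m * (D - 1) := Nat.mul_le_mul_left _ hq
    have h3 : D ^ (m + 1) = D ^ m * (D - 1) + D ^ m := by
      calc D ^ (m + 1) = D ^ m * ((D - 1) + 1) := by rw [pow_succ]; congr 1; omega
      _ = D ^ m * (D - 1) + D ^ m := by ring
    have h4 := Nat.mod_lt (a - k) hs0
    simp only [hval, if_neg (by omega : ¬ a < k)]
    omega
  -- the code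
  refine ⟨fun i => word D hD0 (len i) (val i), ?_, fun i => by simp [word_length, hlen]⟩
  have hvlt' : ∀ a : ℕ, a < n → val a < D ^ (len a) := by
    intro a han
    by_cases ha : a < k
    · simp only [hval, hlen, if_pos ha]; omega
    · simp only [hlen, if_neg ha]; exact hvlt a (by omega) han
  -- key: any prefix relation forces equal indices
  have key : ∀ i j : Fin n, (word D hD0 (len i) (val i)) <+: (word D hD0 (len j) (val j)) → i = j := by
    intro i j hpre
    have hlplen := hpre.length_le
    rw [word_length, word_length] at hlplen
    have hdig : ∀ t, t < len (i : ℕ) →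
        val i / D ^ t % D = val j / D ^ t % D := by
      intro t ht
      have ht1 : t < (word D hD0 (len i) (val i)).length := by rwa [word_length]
      have := hpre.getElem ht1
      rw [word_getElem, word_getElem] at this
      exact congrArg Fin.val this
    by_cases hik : (i : ℕ) < k <;> by_cases hjk : (j : ℕ) < k
    · -- both short
      have : val i = val j := dig_inj D hD0 m (val i) (val j)
        (by simpa [hlen, hik] using hvlt' i i.2) (by simpa [hlen, hjk] using hvlt' j j.2)
        (by simpa [hlen, hik] using hdig)
      simp only [hval, if_pos hik, if_pos hjk] at this
      exact Fin.ext this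
    · -- i short, j long : contradiction since val j % D^m ≥ k > val i
      exfalso
      have hmj := hmod j (by omega) j.2
      have hvi : val i % D ^ m = val i := Nat.mod_eq_of_lt (by simpa [hlen, hik] using hvlt' i i.2)
      have heq : val i = val j % D ^ m := by
        apply dig_inj D hD0 m
        · simpa [hlen, hik] using hvlt' i i.2
        · exact Nat.mod_lt _ (pow_pos hD0 m)
        · intro t ht
          rw [← dig_mod D m t (val j) hD0 ht]
          exact hdig t (by simpa [hlen, hik] using ht)
      have : val i < k := by simp only [hval, if_pos hik]; exact hik
      omega
    · -- i long, j short : impossible by length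
      simp only [hlen, if_neg hik, if_pos hjk] at hlplen
      omega
    · -- both long
      have hvij : val i = val j := dig_inj D hD0 (m + 1) (val i) (val j)
        (by simpa [hlen, hik] using hvlt' i i.2) (by simpa [hlen, hjk] using hvlt' j j.2)
        (by simpa [hlen, hik] using hdig)
      have h1 := hmod i (by omega) i.2
      have h2 := hmod j (by omega) j.2
      have h3 := hdiv i (by omega) i.2
      have h4 := hdiv j (by omega) j.2
      rw [hvij] at h1 h3
      have hs0 := hspos i (by omega) i.2
      have e1 : ((i : ℕ) - k) % s = ((j : ℕ) - k) % s := by omega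
      have e2 : ((i : ℕ) - k) % s + s * (((i : ℕ) - k) / s) = (i : ℕ) - k :=
        Nat.mod_add_div _ _
      have e3 : ((j : ℕ) - k) % s + s * (((j : ℕ) - k) / s) = (j : ℕ) - k :=
        Nat.mod_add_div _ _
      have e4 : ((i : ℕ) - k) / s = ((j : ℕ) - k) / s := by omega
      apply Fin.ext
      rw [e1, e4] at e2
      omega
  constructor
  · intro i j hij
    apply key i j
    simp only at hij
    rw [hij]
  · intro i j hij hpre
    exact hij (key i j hpre)

lemma kraft_nat (D n L : ℕ) (c : Fin n → List (Fin D)) (hc : IsPrefixCode c)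
    (hL : ∀ i, (c i).length ≤ L) :
    ∑ i : Fin n, D ^ (L - (c i).length) ≤ D ^ L := by
  classical
  set l : Fin n → ℕ := fun i => (c i).length with hl
  let ext : (i : Fin n) → (Fin (L - l i) → Fin D) → (Fin L → Fin D) := fun i h t =>
    if ht : (t : ℕ) < l i then (c i).get ⟨t, ht⟩ else h ⟨(t : ℕ) - l i, by
      have := hL i; have := t.2; simp only [hl] at *; omega⟩
  have hinj : ∀ i, Function.Injective (ext i) := by
    intro i h h' he
    funext s
    have hsl : l i + (s : ℕ) < L := by have := hL i; have := s.2; omega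
    have h2 := congrFun he ⟨l i + (s : ℕ), hsl⟩
    simp only [ext, dif_neg (show ¬ (l i + (s : ℕ) < l i) by omega)] at h2
    simpa using h2
  let E : Fin n → Finset (Fin L → Fin D) := fun i => Finset.univ.image (ext i)
  have hEmem : ∀ i f, f ∈ E i → ∀ t (ht : t < l i), f ⟨t, lt_of_lt_of_le ht (hL i)⟩
      = (c i)[t]'ht := by
    intro i f hf t ht
    simp only [E, Finset.mem_image, Finset.mem_univ, true_and] at hf
    obtain ⟨h, hfh⟩ := hf
    rw [← hfh]
    simp only [ext]
    rw [dif_pos ht]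
    rfl
  have hcard : ∀ i, (E i).card = D ^ (L - l i) := by
    intro i
    rw [Finset.card_image_of_injective _ (hinj i), Finset.card_univ]
    simp [Fintype.card_fun]
  have hdisj : ∀ i j : Fin n, i ≠ j → Disjoint (E i) (E j) := by
    intro i j hij
    rw [Finset.disjoint_left]
    intro f hfi hfj
    rcases le_total (l i) (l j) with hle | hle
    · refine hc.2 i j hij ?_
      apply prefix_of_forall_getElem (by exact hle)
      intro t ht
      exact (hEmem i f hfi t ht).symm.trans (hEmem j f hfj t (lt_of_lt_of_le ht hle))
    · refine hc.2 j i hij.symm ?_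
      apply prefix_of_forall_getElem (by exact hle)
      intro t ht
      exact (hEmem j f hfj t ht).symm.trans (hEmem i f hfi t (lt_of_lt_of_le ht hle))
  calc ∑ i : Fin n, D ^ (L - (c i).length) = ∑ i : Fin n, (E i).card := by
        exact Finset.sum_congr rfl fun i _ => (hcard i).symm
    _ = (Finset.univ.biUnion E).card :=
        (Finset.card_biUnion (fun i _ j _ hij => hdisj i j hij)).symm
    _ ≤ Fintype.card (Fin L → Fin D) := Finset.card_le_univ _
    _ = D ^ L := by simp [Fintype.card_fun]

lemma kraft_real (D n : ℕ) (hD : 2 ≤ D) (c : Fin n → List (Fin D)) (hc : IsPrefixCode c) :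
    ∑ i : Fin n, ((1 : ℝ) / (D : ℝ) ^ (c i).length) ≤ 1 := by
  set L := Finset.univ.sup (fun i : Fin n => (c i).length) with hLdef
  have hL : ∀ i, (c i).length ≤ L := fun i => Finset.le_sup (f := fun i : Fin n => (c i).length) (Finset.mem_univ i)
  have hk := kraft_nat D n L c hc hL
  have hD0 : (0 : ℝ) < (D : ℝ) := by exact_mod_cast (by omega : 0 < D)
  have hpos : ∀ i : Fin n, (0 : ℝ) < (D : ℝ) ^ (c i).length := fun i => pow_pos hD0 _
  have hLpos : (0 : ℝ) < (D : ℝ) ^ L := pow_pos hD0 L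
  have key : ∀ i : Fin n,
      (1 : ℝ) / (D : ℝ) ^ (c i).length = (D : ℝ) ^ (L - (c i).length) / (D : ℝ) ^ L := by
    intro i
    rw [div_eq_div_iff (hpos i).ne' hLpos.ne', one_mul, ← pow_add]
    congr 1
    have := hL i
    omega
  calc ∑ i : Fin n, (1 : ℝ) / (D : ℝ) ^ (c i).length
      = (∑ i : Fin n, ((D : ℝ) ^ (L - (c i).length))) / (D : ℝ) ^ L := by
        rw [Finset.sum_div]; exact Finset.sum_congr rfl fun i _ => key i
    _ ≤ 1 := by
        rw [div_le_one hLpos]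
        calc ∑ i : Fin n, ((D : ℝ) ^ (L - (c i).length))
            = ((∑ i : Fin n, D ^ (L - (c i).length) : ℕ) : ℝ) := by push_cast; rfl
          _ ≤ ((D ^ L : ℕ) : ℝ) := by exact_mod_cast hk
          _ = (D : ℝ) ^ L := by push_cast; rfl



lemma pointwise_ineq (d : ℝ) (hd : 2 ≤ d) (m l : ℕ) :
    (d - 1) * m + d ≤ (d - 1) * l + d ^ (m + 1) / d ^ l := by
  have hd0 : (0 : ℝ) < d := by linarith
  have hpl : (0 : ℝ) < d ^ l := pow_pos hd0 l
  rcases le_or_gt l m with h | h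
  · have hdiv : d ^ (m + 1) / d ^ l = d ^ (m + 1 - l) := by
      rw [div_eq_iff hpl.ne', ← pow_add]
      congr 1
      omega
    rw [hdiv]
    have hb : 1 + ((m + 1 - l : ℕ) : ℝ) * (d - 1) ≤ d ^ (m + 1 - l) := by
      have h2 := one_add_mul_le_pow (a := d - 1) (by linarith) (m + 1 - l)
      have h3 : (1 : ℝ) + (d - 1) = d := by ring
      rwa [h3] at h2
    have hcast : ((m + 1 - l : ℕ) : ℝ) = (m : ℝ) + 1 - (l : ℝ) := by
      have : (l : ℝ) ≤ (m : ℝ) := by exact_mod_cast h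
      push_cast [Nat.cast_sub (by omega : l ≤ m + 1)]
      ring
    rw [hcast] at hb
    nlinarith [hb]
  · rcases eq_or_lt_of_le (Nat.succ_le_of_lt h) with he | hlt
    · have hdiv : d ^ (m + 1) / d ^ l = 1 := by
        rw [← he]; exact div_self (pow_pos hd0 _).ne'
      rw [hdiv]
      have : ((l : ℝ)) = (m : ℝ) + 1 := by exact_mod_cast he.symm
      rw [this]
      ring_nf
      linarith
    · have h1 : (0 : ℝ) < d ^ (m + 1) / d ^ l := by positivity
      have h2 : (m : ℝ) + 2 ≤ (l : ℝ) := by exact_mod_cast hlt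
      nlinarith [h1, h2]

lemma sum_len_lower (D n m : ℕ) (hD : 2 ≤ D) (c : Fin n → List (Fin D))
    (hkraft : ∑ i : Fin n, ((1 : ℝ) / (D : ℝ) ^ (c i).length) ≤ 1) :
    (n : ℝ) * (((D : ℝ) - 1) * m + D) ≤
      ((D : ℝ) - 1) * (∑ i : Fin n, ((c i).length : ℝ)) + (D : ℝ) ^ (m + 1) := by
  have hd : (2 : ℝ) ≤ (D : ℝ) := by exact_mod_cast hD
  have hd0 : (0 : ℝ) < (D : ℝ) := by linarith
  have hsum : (n : ℝ) * (((D : ℝ) - 1) * m + D) ≤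
      ∑ i : Fin n, (((D : ℝ) - 1) * ((c i).length : ℝ) + (D : ℝ) ^ (m + 1) / (D : ℝ) ^ (c i).length) := by
    calc (n : ℝ) * (((D : ℝ) - 1) * m + D)
        = ∑ _i : Fin n, (((D : ℝ) - 1) * m + (D : ℝ)) := by
          simp [Finset.sum_const, Finset.card_univ, nsmul_eq_mul]; ring
      _ ≤ _ := Finset.sum_le_sum fun i _ => pointwise_ineq (D : ℝ) hd m (c i).length
  have hsplit : ∑ i : Fin n, (((D : ℝ) - 1) * ((c i).length : ℝ) +
        (D : ℝ) ^ (m + 1) / (D : ℝ) ^ (c i).length)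
      = ((D : ℝ) - 1) * (∑ i : Fin n, ((c i).length : ℝ)) +
        (D : ℝ) ^ (m + 1) * ∑ i : Fin n, ((1 : ℝ) / (D : ℝ) ^ (c i).length) := by
    rw [Finset.sum_add_distrib, Finset.mul_sum, Finset.mul_sum]
    congr 1
    exact Finset.sum_congr rfl fun i _ => by rw [← mul_one_div]
  rw [hsplit] at hsum
  have hpow : (0 : ℝ) ≤ (D : ℝ) ^ (m + 1) := by positivity
  nlinarith [hsum, hkraft, hpow]


lemma card_filter_lt (n k : ℕ) (hkn : k ≤ n) :
    (Finset.univ.filter (fun i : Fin n => (i : ℕ) < k)).card = k := by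
  classical
  have himg : (Finset.univ.filter (fun i : Fin n => (i : ℕ) < k))
      = Finset.image (Fin.castLE hkn) Finset.univ := by
    ext x
    simp only [Finset.mem_filter, Finset.mem_univ, true_and, Finset.mem_image]
    constructor
    · intro hx; exact ⟨⟨(x : ℕ), hx⟩, rfl⟩
    · rintro ⟨y, rfl⟩; exact y.2
  rw [himg, Finset.card_image_of_injective _ (Fin.castLE_injective hkn),
    Finset.card_univ, Fintype.card_fin]

lemma card_filter_not_lt (n k : ℕ) (hkn : k ≤ n) :
    (Finset.univ.filter (fun i : Fin n => ¬ (i : ℕ) < k)).card = n - k := by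
  classical
  have := Finset.card_filter_add_card_filter_not
    (s := (Finset.univ : Finset (Fin n))) (p := fun i : Fin n => (i : ℕ) < k)
  rw [card_filter_lt n k hkn, Finset.card_univ, Fintype.card_fin] at this
  omega

lemma sorted_head_sum (n k : ℕ) (hkn : k ≤ n) (hn : 0 < n) (P : Fin n → ℝ)
    (hsum : ∑ i, P i = 1)
    (hsorted : ∀ i j : Fin n, i ≤ j → P j ≤ P i) :
    (k : ℝ) / n ≤ ∑ i ∈ Finset.univ.filter (fun i : Fin n => (i : ℕ) < k), P i := by
  classical
  have hn' : (0 : ℝ) < n := by exact_mod_cast hn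
  rcases eq_or_lt_of_le hkn with he | hlt
  · have hfull : (Finset.univ.filter (fun i : Fin n => (i : ℕ) < k)) = Finset.univ := by
      ext x
      simp only [Finset.mem_filter, Finset.mem_univ, true_and, iff_true]
      rw [he]; exact x.2
    rw [hfull, hsum, he]
    rw [div_self hn'.ne']
  · set t : Fin n := ⟨k, hlt⟩ with ht
    set A := ∑ i ∈ Finset.univ.filter (fun i : Fin n => (i : ℕ) < k), P i with hA
    have h1 : (k : ℝ) * P t ≤ A := by
      have h2 := Finset.card_nsmul_le_sum
        (Finset.univ.filter (fun i : Fin n => (i : ℕ) < k)) P (P t)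
        (fun i hi => by
          apply hsorted
          simp only [Finset.mem_filter] at hi
          exact le_of_lt (by exact hi.2))
      rwa [card_filter_lt n k hkn, nsmul_eq_mul] at h2
    have h2 : (1 : ℝ) - A ≤ ((n : ℝ) - k) * P t := by
      have h3 := Finset.sum_le_card_nsmul
        (Finset.univ.filter (fun i : Fin n => ¬ (i : ℕ) < k)) P (P t)
        (fun i hi => by
          apply hsorted
          simp only [Finset.mem_filter] at hi
          exact le_of_not_gt hi.2)
      rw [card_filter_not_lt n k hkn, nsmul_eq_mul] at h3
      have h4 : A + ∑ i ∈ Finset.univ.filter (fun i : Fin n => ¬ (i : ℕ) < k), P i = 1 := by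
        rw [hA, Finset.sum_filter_add_sum_filter_not, hsum]
      have h5 : ((n - k : ℕ) : ℝ) = (n : ℝ) - k := by
        push_cast [Nat.cast_sub hkn]; ring
      rw [h5] at h3
      linarith
    rw [div_le_iff₀ hn']
    have hk0 : (0 : ℝ) ≤ (k : ℝ) := by positivity
    have hnk0 : (0 : ℝ) ≤ (n : ℝ) - k := by
      have : (k : ℝ) ≤ n := by exact_mod_cast hkn
      linarith
    nlinarith [mul_le_mul_of_nonneg_left h1 hnk0, mul_le_mul_of_nonneg_left h2 hk0]


end Stmt10Aux

open Stmt10Aux in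
/-- If a nonincreasing PMF P is a point of maximum, then the optimal
length sequence of the uniform distribution (k lengths m and n − k lengths m + 1)
achieves the minimum expected length of P. -/
theorem stmt_10 (D n m : ℕ) (hD : 2 ≤ D) (hn : 2 ≤ n)
    (hm : D ^ m ≤ n) (hm' : n < D ^ (m + 1))
    (k : ℕ) (hk : k = D ^ m - (⌈((n - D ^ m : ℕ) : ℚ) / ((D : ℚ) - 1)⌉).toNat)
    (P : Fin n → ℝ) (hP : IsPMF P)
    (hsorted : ∀ i j : Fin n, i ≤ j → P j ≤ P i)
    (hmax : minExpLen D P = minExpLen D (unif n)) :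
    ∑ i : Fin n, P i * (((if (i : ℕ) < k then m else m + 1) : ℕ) : ℝ) = minExpLen D P := by
  classical
  obtain ⟨hPpos, hPsum⟩ := hP
  have hD0 : 0 < D := by omega
  have hn0 : 0 < n := by omega
  have hnR : (0 : ℝ) < n := by exact_mod_cast hn0
  obtain ⟨N, hNdef⟩ : ∃ N : ℕ, N = n - D ^ m := ⟨_, rfl⟩
  obtain ⟨r, hrdef⟩ : ∃ r : ℕ, r = (⌈((N : ℚ)) / ((D : ℚ) - 1)⌉).toNat := ⟨_, rfl⟩
  have hDq : (2 : ℚ) ≤ (D : ℚ) := by exact_mod_cast hD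
  have hd1q : (0 : ℚ) < (D : ℚ) - 1 := by linarith
  have hceil_nn : 0 ≤ ⌈(N : ℚ) / ((D : ℚ) - 1)⌉ :=
    Int.ceil_nonneg (div_nonneg (by positivity) hd1q.le)
  have hrZ : (r : ℤ) = ⌈(N : ℚ) / ((D : ℚ) - 1)⌉ := by
    rw [hrdef]; exact Int.toNat_of_nonneg hceil_nn
  have hr1 : (N : ℤ) ≤ (r : ℤ) * ((D : ℤ) - 1) := by
    have h1 : (N : ℚ) / ((D : ℚ) - 1) ≤ ((r : ℤ) : ℚ) := by rw [hrZ]; exact Int.le_ceil _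
    rw [div_le_iff₀ hd1q] at h1
    exact_mod_cast h1
  have hr2 : ∀ A : ℤ, (N : ℤ) ≤ A * ((D : ℤ) - 1) → (r : ℤ) ≤ A := by
    intro A hA
    rw [hrZ]
    refine Int.ceil_le.2 ?_
    rw [div_le_iff₀ hd1q]
    exact_mod_cast hA
  have hNZ : (N : ℤ) = (n : ℤ) - ((D : ℤ)) ^ m := by
    rw [hNdef]; push_cast [Nat.cast_sub hm]; ring
  have hpowZ : ((D : ℤ)) ^ m * ((D : ℤ) - 1) = (D : ℤ) ^ (m + 1) - (D : ℤ) ^ m := by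
    rw [pow_succ]; ring
  have hr3 : r ≤ D ^ m := by
    have h1 : (N : ℤ) ≤ ((D : ℤ) ^ m) * ((D : ℤ) - 1) := by
      have hm'Z : (n : ℤ) < (D : ℤ) ^ (m + 1) := by exact_mod_cast hm'
      rw [hNZ, hpowZ]; linarith
    have h2 := hr2 ((D : ℤ) ^ m) h1
    have h3 : (r : ℤ) ≤ ((D ^ m : ℕ) : ℤ) := by push_cast; exact h2
    exact_mod_cast h3
  have hkr : k = D ^ m - r := by rw [hrdef, hNdef]; exact hk
  have hkD : k ≤ D ^ m := by omega
  have hkn : k ≤ n := by omega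
  have hnk : n - k = N + r := by omega
  have hDrZ : (N : ℤ) + r ≤ (D : ℤ) * r := by
    have he : (r : ℤ) * ((D : ℤ) - 1) = (D : ℤ) * r - r := by ring
    linarith [hr1]
  have hDrN : N + r ≤ D * r := by exact_mod_cast hDrZ
  have hkraft0 : n - k ≤ D * (D ^ m - k) := by
    have hrk : D ^ m - k = r := by omega
    rw [hrk, hnk]
    exact hDrN
  obtain ⟨c₀, hc₀, hlen₀⟩ := exists_code D n m k hD hkD hkn hkraft0
  -- goal sum equals expected length of c₀
  have hgoal_eq : ∑ i : Fin n, P i * (((if (i : ℕ) < k then m else m + 1) : ℕ) : ℝ)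
      = expLen P c₀ := by
    unfold expLen
    exact Finset.sum_congr rfl fun i _ => by rw [hlen₀ i]
  -- splitting expected length of c₀ for any weights
  have hsplit : ∀ Q : Fin n → ℝ, expLen Q c₀
      = (m : ℝ) * (∑ i, Q i)
        + ∑ i ∈ Finset.univ.filter (fun i : Fin n => ¬ (i : ℕ) < k), Q i := by
    intro Q
    unfold expLen
    rw [Finset.sum_filter, Finset.mul_sum, ← Finset.sum_add_distrib]
    refine Finset.sum_congr rfl fun i _ => ?_
    by_cases hik : (i : ℕ) < k
    · simp only [hlen₀ i, if_pos hik, hik, not_true_eq_false, if_false]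
      push_cast; ring
    · simp only [hlen₀ i, if_neg hik, hik, not_false_eq_true, if_true]
      push_cast; ring
  have hsumU : ∑ i : Fin n, unif n i = 1 := by
    unfold unif
    rw [Finset.sum_const, Finset.card_univ, Fintype.card_fin, nsmul_eq_mul]
    field_simp
  have hBU : ∑ i ∈ Finset.univ.filter (fun i : Fin n => ¬ (i : ℕ) < k), unif n i
      = ((n - k : ℕ) : ℝ) / n := by
    unfold unif
    rw [Finset.sum_const, card_filter_not_lt n k hkn, nsmul_eq_mul]
    ring
  have hA := sorted_head_sum n k hkn hn0 P hPsum hsorted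
  have hBP : ∑ i ∈ Finset.univ.filter (fun i : Fin n => ¬ (i : ℕ) < k), P i
      = 1 - ∑ i ∈ Finset.univ.filter (fun i : Fin n => (i : ℕ) < k), P i := by
    have h := Finset.sum_filter_add_sum_filter_not Finset.univ (fun i : Fin n => (i : ℕ) < k) P
    rw [hPsum] at h
    linarith
  have h2 : expLen P c₀ ≤ expLen (unif n) c₀ := by
    rw [hsplit P, hsplit (unif n), hPsum, hsumU, hBU]
    have hnkc : ((n - k : ℕ) : ℝ) = (n : ℝ) - k := by push_cast [Nat.cast_sub hkn]; ring
    have hkey : ∑ i ∈ Finset.univ.filter (fun i : Fin n => ¬ (i : ℕ) < k), P i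
        ≤ ((n - k : ℕ) : ℝ) / n := by
      rw [hBP, hnkc]
      have hdiv : ((n : ℝ) - k) / n = 1 - (k : ℝ) / n := by field_simp
      rw [hdiv]
      linarith [hA]
    linarith [hkey]
  have hbddP : BddBelow {x : ℝ | ∃ c : Fin n → List (Fin D), IsPrefixCode c ∧ x = expLen P c} := by
    refine ⟨0, ?_⟩
    rintro x ⟨c, hc, rfl⟩
    exact Finset.sum_nonneg fun i _ => mul_nonneg (hPpos i).le (by positivity)
  have h1 : minExpLen D P ≤ expLen P c₀ := csInf_le hbddP ⟨c₀, hc₀, rfl⟩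
  -- lower bound on total length of any prefix code
  have hSNc : ∀ c : Fin n → List (Fin D), IsPrefixCode c →
      ((n * m + (n - k) : ℕ) : ℝ) ≤ ∑ i : Fin n, ((c i).length : ℝ) := by
    intro c hc
    have hS := sum_len_lower D n m hD c (kraft_real D n hD c hc)
    obtain ⟨S, hSdef⟩ : ∃ S : ℕ, S = ∑ i : Fin n, (c i).length := ⟨_, rfl⟩
    have hScast : (S : ℝ) = ∑ i : Fin n, ((c i).length : ℝ) := by rw [hSdef]; push_cast; rfl
    have hNR : (N : ℝ) = (n : ℝ) - (D : ℝ) ^ m := by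
      rw [hNdef]; push_cast [Nat.cast_sub hm]; ring
    have hpR : ((D : ℝ)) ^ (m + 1) = (D : ℝ) * (D : ℝ) ^ m := by rw [pow_succ]; ring
    rw [← hScast, hpR] at hS
    have hkey : ((N : ℝ)) ≤ ((S : ℝ) - (n : ℝ) * m - N) * ((D : ℝ) - 1) := by
      rw [hNR]
      nlinarith [hS]
    have hkeyZ : (N : ℤ) ≤ ((S : ℤ) - (n : ℤ) * m - N) * ((D : ℤ) - 1) := by
      exact_mod_cast hkey
    have hrS := hr2 _ hkeyZ
    have hfin : ((n : ℤ) * m + N + r) ≤ (S : ℤ) := by linarith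
    rw [← hScast]
    have hfin2 : ((n * m + (n - k) : ℕ) : ℤ) ≤ (S : ℤ) := by
      rw [hnk]; push_cast; linarith
    exact_mod_cast hfin2
  -- exact total length of c₀
  have hS0nat : ∑ i : Fin n, (c₀ i).length = n * m + (n - k) := by
    calc ∑ i : Fin n, (c₀ i).length
        = ∑ i : Fin n, (if (i : ℕ) < k then m else m + 1) :=
          Finset.sum_congr rfl fun i _ => hlen₀ i
      _ = k * m + (n - k) * (m + 1) := by
          rw [Finset.sum_ite, Finset.sum_const, Finset.sum_const,
            card_filter_lt n k hkn, card_filter_not_lt n k hkn, smul_eq_mul, smul_eq_mul]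
      _ = n * m + (n - k) := by zify [hkn]; ring
  have hS0 : ∑ i : Fin n, ((c₀ i).length : ℝ) = ((n * m + (n - k) : ℕ) : ℝ) := by
    rw [← hS0nat]; push_cast; rfl
  have hexp : ∀ c' : Fin n → List (Fin D), expLen (unif n) c'
      = (∑ i : Fin n, ((c' i).length : ℝ)) / n := by
    intro c'
    unfold expLen unif
    rw [Finset.sum_div]
    exact Finset.sum_congr rfl fun i _ => by ring
  have h3 : expLen (unif n) c₀ ≤ minExpLen D (unif n) := by
    refine le_csInf ⟨expLen (unif n) c₀, ⟨c₀, hc₀, rfl⟩⟩ ?_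
    rintro x ⟨c, hc, rfl⟩
    rw [hexp, hexp]
    apply div_le_div_of_nonneg_right ?_ hnR.le
    rw [hS0]
    exact hSNc c hc
  rw [hgoal_eq]
  linarith [h1, h2, h3]
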